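/- Let G = (V, E) be an undirected graph on n vertices. Then the sum over all edges e ∈ E of 1/s_e is at most n − 1, where s_e denotes the strong connectivity of e. -/
import Mathlib


open Finset

variable {V : Type} [Fintype V] [DecidableEq V]

/-- The value of the cut determined by `T` in the subgraph of `G` induced by the
vertex set `U`: the number of edges of `G` with one endpoint in `T` and the
other in `U \ T`. -/
def cutValOn (G : SimpleGraph V) [DecidableRel G.Adj] (U T : Finset V) : ℕ :=
  ∑ u ∈ T, ∑ v ∈ U \ T, if G.Adj u v then 1 else 0

/-- The vertex-induced subgraph of `G` on `U` is `k`-connected: every cut of it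
has value at least `k`. -/
def KConnOn (G : SimpleGraph V) [DecidableRel G.Adj] (k : ℕ) (U : Finset V) : Prop :=
  ∀ T : Finset V, T ⊆ U → T.Nonempty → T ≠ U → k ≤ cutValOn G U T

/-- The strong connectivity of an edge `e`: the largest `k` such that some
`k`-connected vertex-induced subgraph of `G` contains (both endpoints of) `e`. -/
noncomputable def strongConn (G : SimpleGraph V) [DecidableRel G.Adj] (e : Sym2 V) : ℕ :=
  sSup {k | ∃ U : Finset V, (∀ x ∈ e, x ∈ U) ∧ KConnOn G k U}

lemma cutValOn_le (G : SimpleGraph V) [DecidableRel G.Adj] (U T : Finset V) :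
    cutValOn G U T ≤ T.card * Fintype.card V := by
  unfold cutValOn
  calc ∑ u ∈ T, ∑ v ∈ U \ T, (if G.Adj u v then 1 else 0)
      ≤ ∑ u ∈ T, Fintype.card V := by
        refine Finset.sum_le_sum fun u _ => ?_
        calc ∑ v ∈ U \ T, (if G.Adj u v then 1 else 0) ≤ ∑ v ∈ U \ T, 1 := by
              refine Finset.sum_le_sum fun v _ => ?_; split <;> omega
          _ = (U \ T).card := by simp
          _ ≤ Fintype.card V := Finset.card_le_card (Finset.subset_univ _) |>.trans
              (by simp)
    _ = T.card * Fintype.card V := by simp [Finset.sum_const, mul_comm]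

lemma strongConn_bddAbove (G : SimpleGraph V) [DecidableRel G.Adj] {a b : V} (hab : a ≠ b) :
    BddAbove {k | ∃ U : Finset V, (∀ x ∈ s(a, b), x ∈ U) ∧ KConnOn G k U} := by
  refine ⟨Fintype.card V, ?_⟩
  rintro k ⟨U, hU, hK⟩
  have ha : a ∈ U := hU a (by simp)
  have hb : b ∈ U := hU b (by simp)
  have h1 : k ≤ cutValOn G U {a} := by
    refine hK {a} (by simpa) ⟨a, by simp⟩ ?_
    intro h
    rw [← h] at hb
    exact hab (Finset.mem_singleton.mp hb).symm
  have := cutValOn_le G U {a}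
  simp only [Finset.card_singleton, one_mul] at this
  omega

lemma strongConn_mem (G : SimpleGraph V) [DecidableRel G.Adj] {a b : V} (hab : a ≠ b) :
    ∃ U : Finset V, (∀ x ∈ s(a, b), x ∈ U) ∧ KConnOn G (strongConn G s(a, b)) U := by
  have : strongConn G s(a, b) ∈
      {k | ∃ U : Finset V, (∀ x ∈ s(a, b), x ∈ U) ∧ KConnOn G k U} := by
    apply Nat.sSup_mem
    · exact ⟨0, Finset.univ, by simp, fun T _ _ _ => Nat.zero_le _⟩
    · exact strongConn_bddAbove G hab
  exact this

lemma le_strongConn (G : SimpleGraph V) [DecidableRel G.Adj] {a b : V} (hab : a ≠ b)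
    {c : ℕ} {U : Finset V} (ha : a ∈ U) (hb : b ∈ U) (hK : KConnOn G c U) :
    c ≤ strongConn G s(a, b) :=
  le_csSup (strongConn_bddAbove G hab) ⟨U, by simp [ha, hb], hK⟩

lemma one_le_strongConn (G : SimpleGraph V) [DecidableRel G.Adj] {a b : V} (h : G.Adj a b) :
    1 ≤ strongConn G s(a, b) := by
  refine le_strongConn G h.ne (U := {a, b}) (by simp) (by simp) ?_
  intro T hT hTne hTne'
  -- T is a nonempty proper subset of {a,b} : T = {a} or T = {b}
  obtain ⟨x, hx⟩ := hTne
  have hxU := hT hx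
  simp only [Finset.mem_insert, Finset.mem_singleton] at hxU
  have hsub : T = {x} := by
    apply Finset.eq_singleton_iff_unique_mem.mpr
    refine ⟨hx, fun y hy => ?_⟩
    have hyU := hT hy
    simp only [Finset.mem_insert, Finset.mem_singleton] at hyU
    by_contra hne
    -- then T contains both a and b, so T = {a,b} = U
    apply hTne'
    apply Finset.Subset.antisymm hT
    intro z hz
    simp only [Finset.mem_insert, Finset.mem_singleton] at hz
    rcases hxU with rfl | rfl <;> rcases hyU with rfl | rfl <;>
      first | (exact absurd rfl hne) | (rcases hz with rfl | rfl <;> assumption)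
  subst hsub
  rcases hxU with rfl | rfl
  · have hb' : b ∈ ({x, b} : Finset V) \ {x} := by
      simp [Finset.mem_sdiff, (h.ne).symm]
    calc (1 : ℕ) = ∑ v ∈ {b}, (if G.Adj x v then 1 else 0) := by rw [Finset.sum_singleton, if_pos h]
      _ ≤ ∑ v ∈ ({x, b} : Finset V) \ {x}, (if G.Adj x v then 1 else 0) := by
          apply Finset.sum_le_sum_of_subset
          intro v hv; simp only [Finset.mem_singleton] at hv; subst hv; exact hb'
      _ = cutValOn G {x, b} {x} := by simp [cutValOn]
  · have ha' : a ∈ ({a, x} : Finset V) \ {x} := by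
      simp [Finset.mem_sdiff, h.ne]
    calc (1 : ℕ) = ∑ v ∈ {a}, (if G.Adj x v then 1 else 0) := by rw [Finset.sum_singleton, if_pos h.symm]
      _ ≤ ∑ v ∈ ({a, x} : Finset V) \ {x}, (if G.Adj x v then 1 else 0) := by
          apply Finset.sum_le_sum_of_subset
          intro v hv; simp only [Finset.mem_singleton] at hv; subst hv; exact ha'
      _ = cutValOn G {a, x} {x} := by simp [cutValOn]

def edgesIn (G : SimpleGraph V) [DecidableRel G.Adj] (U : Finset V) : Finset (Sym2 V) :=
  G.edgeFinset.filter (fun e => ∀ x ∈ e, x ∈ U)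

lemma cutValOn_eq_card (G : SimpleGraph V) [DecidableRel G.Adj] (U T : Finset V) :
    cutValOn G U T = ((T ×ˢ (U \ T)).filter fun p => G.Adj p.1 p.2).card := by
  rw [Finset.card_filter, Finset.sum_product]
  rfl

lemma crossing_card_le (G : SimpleGraph V) [DecidableRel G.Adj] (U T : Finset V) :
    ((edgesIn G U).filter fun e => ¬ ((∀ x ∈ e, x ∈ T) ∨ (∀ x ∈ e, x ∈ U \ T))).card
      ≤ cutValOn G U T := by
  rw [cutValOn_eq_card]
  apply Finset.card_le_card_of_surjOn (fun p => s(p.1, p.2))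
  intro e he
  simp only [Finset.coe_filter, Set.mem_setOf_eq, edgesIn, Finset.mem_filter] at he
  obtain ⟨⟨heE, heU⟩, hno⟩ := he
  induction e with
  | _ a b =>
    have hadj : G.Adj a b := by rwa [SimpleGraph.mem_edgeFinset, SimpleGraph.mem_edgeSet] at heE
    have ha : a ∈ U := heU a (by simp)
    have hb : b ∈ U := heU b (by simp)
    push_neg at hno
    obtain ⟨hn1, hn2⟩ := hno
    by_cases haT : a ∈ T
    · have hbT : b ∉ T := by
        intro hbT
        obtain ⟨x, hx, hxT⟩ := hn1
        rcases Sym2.mem_iff.mp hx with rfl | rfl <;> exact hxT (by assumption)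
      refine ⟨(a, b), ?_, rfl⟩
      simp only [Finset.coe_filter, Set.mem_setOf_eq, Finset.mem_product, Finset.mem_sdiff]
      exact ⟨⟨haT, hb, hbT⟩, hadj⟩
    · have hbT : b ∈ T := by
        by_contra hbT
        obtain ⟨x, hx, hxT⟩ := hn2
        rcases Sym2.mem_iff.mp hx with rfl | rfl <;>
          exact hxT (Finset.mem_sdiff.mpr ⟨by assumption, by assumption⟩)
      refine ⟨(b, a), ?_, Sym2.eq_swap⟩
      simp only [Finset.coe_filter, Set.mem_setOf_eq, Finset.mem_product, Finset.mem_sdiff]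
      exact ⟨⟨hbT, ha, haT⟩, hadj.symm⟩

lemma strongConn_bounds (G : SimpleGraph V) [DecidableRel G.Adj] {U : Finset V} {c : ℕ}
    (hK : KConnOn G c U) : ∀ e ∈ edgesIn G U, c ≤ strongConn G e ∧ 1 ≤ strongConn G e := by
  intro e he
  rw [edgesIn, Finset.mem_filter] at he
  obtain ⟨heE, heU⟩ := he
  induction e with
  | _ a b =>
    have hadj : G.Adj a b := by rwa [SimpleGraph.mem_edgeFinset, SimpleGraph.mem_edgeSet] at heE
    exact ⟨le_strongConn G hadj.ne (heU a (by simp)) (heU b (by simp)) hK,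
      one_le_strongConn G hadj⟩

lemma main_ind (G : SimpleGraph V) [DecidableRel G.Adj] :
    ∀ n : ℕ, ∀ U : Finset V, U.card ≤ n → U.Nonempty →
    ∑ e ∈ edgesIn G U, (1 : ℝ) / (strongConn G e : ℝ) ≤ (U.card : ℝ) - 1 := by
  intro n
  induction n with
  | zero =>
    intro U hU hne
    rw [Nat.le_zero, Finset.card_eq_zero] at hU
    exact absurd hU (Finset.nonempty_iff_ne_empty.mp hne)
  | succ n ih =>
    intro U hU hne
    by_cases h1 : U.card ≤ 1
    · have hcard : U.card = 1 := le_antisymm h1 (Finset.one_le_card.mpr hne)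
      have hempty : edgesIn G U = ∅ := by
        rw [Finset.eq_empty_iff_forall_notMem]
        intro e he
        rw [edgesIn, Finset.mem_filter] at he
        obtain ⟨heE, heU⟩ := he
        induction e with
        | _ a b =>
          have hadj : G.Adj a b := by
            rwa [SimpleGraph.mem_edgeFinset, SimpleGraph.mem_edgeSet] at heE
          obtain ⟨x, hx⟩ := Finset.card_eq_one.mp hcard
          have ha := heU a (by simp)
          have hb := heU b (by simp)
          rw [hx, Finset.mem_singleton] at ha hb
          exact hadj.ne (ha.trans hb.symm)
      rw [hempty, hcard]
      simp
    · push_neg at h1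
      obtain ⟨a, ha⟩ := hne
      have hTfam : ({a} : Finset V) ∈ U.powerset.filter (fun T => T.Nonempty ∧ T ≠ U) := by
        rw [Finset.mem_filter, Finset.mem_powerset]
        refine ⟨Finset.singleton_subset_iff.mpr ha, ⟨a, by simp⟩, ?_⟩
        intro h
        rw [← h, Finset.card_singleton] at h1
        omega
      set 𝒯 := U.powerset.filter (fun T => T.Nonempty ∧ T ≠ U) with h𝒯
      have hne𝒯 : (𝒯.image (cutValOn G U)).Nonempty := ⟨_, Finset.mem_image_of_mem _ hTfam⟩
      set c := (𝒯.image (cutValOn G U)).min' hne𝒯 with hcdef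
      have hK : KConnOn G c U := by
        intro T hT hT1 hT2
        refine Finset.min'_le _ _ (Finset.mem_image_of_mem _ ?_)
        rw [h𝒯, Finset.mem_filter, Finset.mem_powerset]
        exact ⟨hT, hT1, hT2⟩
      obtain ⟨T0, hT0mem, hT0⟩ := Finset.mem_image.mp (Finset.min'_mem _ hne𝒯)
      rw [h𝒯, Finset.mem_filter, Finset.mem_powerset] at hT0mem
      obtain ⟨hT0sub, hT0ne, hT0neU⟩ := hT0mem
      have hT0lt : T0.card < U.card :=
        Finset.card_lt_card (Finset.ssubset_iff_subset_ne.mpr ⟨hT0sub, hT0neU⟩)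
      have hsdne : (U \ T0).Nonempty :=
        Finset.sdiff_nonempty.mpr (fun h => hT0neU (Finset.Subset.antisymm hT0sub h))
      have hsdcard : (U \ T0).card = U.card - T0.card := Finset.card_sdiff_of_subset hT0sub
      have hT0card1 : 1 ≤ T0.card := Finset.one_le_card.mpr hT0ne
      -- split the sum
      set f : Sym2 V → ℝ := fun e => (1 : ℝ) / (strongConn G e : ℝ) with hf
      set P : Sym2 V → Prop := fun e => ∀ x ∈ e, x ∈ T0 with hP
      set Q : Sym2 V → Prop := fun e => ∀ x ∈ e, x ∈ U \ T0 with hQ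
      have hsplit : ∑ e ∈ edgesIn G U, f e =
          ∑ e ∈ (edgesIn G U).filter P, f e
          + ∑ e ∈ ((edgesIn G U).filter fun e => ¬ P e).filter Q, f e
          + ∑ e ∈ ((edgesIn G U).filter fun e => ¬ P e).filter (fun e => ¬ Q e), f e := by
        rw [add_assoc, Finset.sum_filter_add_sum_filter_not,
          Finset.sum_filter_add_sum_filter_not]
      have hclaim1 : (edgesIn G U).filter P = edgesIn G T0 := by
        rw [edgesIn, edgesIn, Finset.filter_filter]
        apply Finset.filter_congr
        intro e _
        constructor
        · rintro ⟨-, h⟩; exact h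
        · intro h; exact ⟨fun x hx => hT0sub (h x hx), h⟩
      have hclaim2 : ((edgesIn G U).filter fun e => ¬ P e).filter Q = edgesIn G (U \ T0) := by
        rw [edgesIn, edgesIn, Finset.filter_filter, Finset.filter_filter]
        apply Finset.filter_congr
        intro e he
        induction e with
        | _ x y =>
          constructor
          · rintro ⟨-, -, h⟩; exact h
          · intro h
            have hx := h x (by simp)
            have hy := h y (by simp)
            rw [Finset.mem_sdiff] at hx hy
            refine ⟨fun z hz => ?_, fun hall => hx.2 (hall x (by simp)), h⟩
            rcases Sym2.mem_iff.mp hz with rfl | rfl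
            · exact hx.1
            · exact hy.1
      -- crossing edge bound
      have hCeq : ((edgesIn G U).filter fun e => ¬ P e).filter (fun e => ¬ Q e)
          = (edgesIn G U).filter fun e => ¬ (P e ∨ Q e) := by
        rw [Finset.filter_filter]
        apply Finset.filter_congr
        intro e _
        rw [not_or]
      have hbounds := strongConn_bounds G hK
      have hCsub : ∀ e ∈ ((edgesIn G U).filter fun e => ¬ P e).filter (fun e => ¬ Q e),
          e ∈ edgesIn G U := fun e he =>
        Finset.filter_subset _ _ (Finset.filter_subset _ _ he)
      have hCcard : (((edgesIn G U).filter fun e => ¬ P e).filter (fun e => ¬ Q e)).card ≤ c := by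
        rw [hCeq, hcdef, ← hT0]
        exact crossing_card_le G U T0
      have hcross : ∑ e ∈ ((edgesIn G U).filter fun e => ¬ P e).filter (fun e => ¬ Q e), f e
          ≤ 1 := by
        rcases Nat.eq_zero_or_pos c with hc0 | hcpos
        · have : ((edgesIn G U).filter fun e => ¬ P e).filter (fun e => ¬ Q e) = ∅ := by
            rw [← Finset.card_eq_zero]; omega
          rw [this]; simp
        · have hcR : (0 : ℝ) < (c : ℝ) := by exact_mod_cast hcpos
          calc ∑ e ∈ ((edgesIn G U).filter fun e => ¬ P e).filter (fun e => ¬ Q e), f e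
              ≤ ∑ _e ∈ ((edgesIn G U).filter fun e => ¬ P e).filter (fun e => ¬ Q e),
                (1 : ℝ) / (c : ℝ) := by
                refine Finset.sum_le_sum fun e he => ?_
                have hb := hbounds e (hCsub e he)
                rw [hf]
                apply one_div_le_one_div_of_le hcR
                exact_mod_cast hb.1
            _ = (((edgesIn G U).filter fun e => ¬ P e).filter (fun e => ¬ Q e)).card / (c : ℝ) := by
                rw [Finset.sum_const, nsmul_eq_mul, mul_one_div]
            _ ≤ (c : ℝ) / (c : ℝ) := by
                have : ((((edgesIn G U).filter fun e => ¬ P e).filter (fun e => ¬ Q e)).card : ℝ)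
                    ≤ (c : ℝ) := by exact_mod_cast hCcard
                exact div_le_div_of_nonneg_right this hcR.le
            _ = 1 := div_self (ne_of_gt hcR)
      -- apply induction hypotheses
      have hA : ∑ e ∈ edgesIn G T0, f e ≤ (T0.card : ℝ) - 1 :=
        ih T0 (by omega) hT0ne
      have hB : ∑ e ∈ edgesIn G (U \ T0), f e ≤ ((U \ T0).card : ℝ) - 1 :=
        ih (U \ T0) (by omega) hsdne
      rw [hsplit, hclaim1, hclaim2]
      have hcast : ((U \ T0).card : ℝ) = (U.card : ℝ) - (T0.card : ℝ) := by
        rw [hsdcard, Nat.cast_sub (Finset.card_le_card hT0sub)]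
      linarith

/-- For a graph `G` on `n ≥ 1` vertices, `∑_{e ∈ E} 1 / s_e ≤ n - 1`, where `s_e`
is the strong connectivity of `e`. -/
theorem stmt1 (V : Type) [Fintype V] [DecidableEq V] [Nonempty V] (G : SimpleGraph V)
    [DecidableRel G.Adj] :
    ∑ e ∈ G.edgeFinset, (1 : ℝ) / (strongConn G e : ℝ) ≤ (Fintype.card V : ℝ) - 1 := by
  have h : edgesIn G Finset.univ = G.edgeFinset := by
    rw [edgesIn]
    apply Finset.filter_true_of_mem
    intro e _ x _
    exact Finset.mem_univ x
  have := main_ind G (Fintype.card V) Finset.univ (by simp) Finset.univ_nonempty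
  rw [h, Finset.card_univ] at this
  exact this
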